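/- Let G, G' be symmetric monoidal categories and let F, F' : G → G' be symmetric monoidal functors. Define (F ⊞ F')(x) := Fx ⊕' F'x on objects and (F ⊞ F')(f) := Ff ⊕' F'f on morphisms, with structure isomorphism (F⊞F')_⊕(x,y) := (F_⊕(x,y) ⊕' F'_⊕(x,y)) ∘ b'(Fx, F'x, Fy, F'y), where b' is the canonical associo-commutator of G', and zero isomorphism (F⊞F')_0 := (F_0 ⊕' F'_0) ∘ d', where d' = l'_0 = r'_0. Then F ⊞ F' is a symmetric monoidal functor. -/

import Mathlib

open CategoryTheory MonoidalCategory
set_option maxHeartbeats 1000000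

/-- `tensorμ` commutes with the braidings in a symmetric monoidal category. -/
lemma tensorμ_braiding' {C : Type*} [Category C] [MonoidalCategory C] [SymmetricCategory C]
    (X₁ X₂ Y₁ Y₂ : C) :
    tensorμ X₁ X₂ Y₁ Y₂ ≫ ((β_ X₁ Y₁).hom ⊗ₘ (β_ X₂ Y₂).hom) =
      (β_ (X₁ ⊗ X₂) (Y₁ ⊗ Y₂)).hom ≫ tensorμ Y₁ Y₂ X₁ X₂ := by
  simp only [tensorμ, Category.assoc, BraidedCategory.braiding_naturality,
    BraidedCategory.braiding_tensor_right_hom, BraidedCategory.braiding_tensor_left_hom,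
    comp_whiskerRight, whisker_assoc, MonoidalCategory.whiskerLeft_comp, pentagon_assoc,
    pentagon_inv_hom_hom_hom_inv_assoc, Iso.inv_hom_id_assoc, whiskerLeft_hom_inv_assoc,
    MonoidalCategory.tensorHom_def]
  slice_rhs 11 12 =>
    rw [← MonoidalCategory.whiskerLeft_comp, ← comp_whiskerRight, SymmetricCategory.symmetry]
  simp only [id_whiskerRight, MonoidalCategory.whiskerLeft_id, Category.id_comp, Category.assoc]
  congr 3
  calc
    _ = 𝟙 _ ⊗≫ (β_ X₁ Y₁).hom ▷ X₂ ▷ Y₂ ⊗≫ Y₁ ◁ X₁ ◁ (β_ X₂ Y₂).hom ⊗≫ 𝟙 _ := by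
      monoidal
    _ = _ := by monoidal

/-- The canonical associo-commutator `b(x,y,z,t) : (x⊕y)⊕(z⊕t) ⟶ (x⊕z)⊕(y⊕t)` of a
symmetric monoidal category, defined as the composite
`a⁻¹ ; (id ⊕ a) ; (id ⊕ (c ⊕ id)) ; (id ⊕ a⁻¹) ; a` (in the paper's conventions). -/
noncomputable def ac {C : Type*} [Category C] [MonoidalCategory C] [BraidedCategory C]
    (x y z t : C) : (x ⊗ y) ⊗ (z ⊗ t) ⟶ (x ⊗ z) ⊗ (y ⊗ t) :=
  (α_ x y (z ⊗ t)).hom ≫ (x ◁ (α_ y z t).inv) ≫ (x ◁ ((β_ y z).hom ▷ t)) ≫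
    (x ◁ (α_ z y t).hom) ≫ (α_ x z (y ⊗ t)).inv

lemma ac_eq_tensorμ {C : Type*} [Category C] [MonoidalCategory C] [BraidedCategory C]
    (x y z t : C) : ac x y z t = tensorμ x y z t := rfl

theorem stmt12 {G G' : Type*}
    [Category G] [MonoidalCategory G] [SymmetricCategory G]
    [Category G'] [MonoidalCategory G'] [SymmetricCategory G']
    (F F' : G ⥤ G')
    (Fm : ∀ x y : G, F.obj x ⊗ F.obj y ⟶ F.obj (x ⊗ y))
    (F'm : ∀ x y : G, F'.obj x ⊗ F'.obj y ⟶ F'.obj (x ⊗ y))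
    (F₀ : 𝟙_ G' ⟶ F.obj (𝟙_ G)) (F'₀ : 𝟙_ G' ⟶ F'.obj (𝟙_ G))
    (hFiso : ∀ x y, IsIso (Fm x y)) (hF'iso : ∀ x y, IsIso (F'm x y))
    (hF₀iso : IsIso F₀) (hF'₀iso : IsIso F'₀)
    (hFnat : ∀ {x x' y y' : G} (f : x ⟶ x') (g : y ⟶ y'),
      (F.map f ⊗ₘ F.map g) ≫ Fm x' y' = Fm x y ≫ F.map (f ⊗ₘ g))
    (hF'nat : ∀ {x x' y y' : G} (f : x ⟶ x') (g : y ⟶ y'),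
      (F'.map f ⊗ₘ F'.map g) ≫ F'm x' y' = F'm x y ≫ F'.map (f ⊗ₘ g))
    (hFSF1 : ∀ x y z : G,
      (Fm x y ▷ F.obj z) ≫ Fm (x ⊗ y) z ≫ F.map (α_ x y z).hom =
        (α_ (F.obj x) (F.obj y) (F.obj z)).hom ≫ (F.obj x ◁ Fm y z) ≫ Fm x (y ⊗ z))
    (hF'SF1 : ∀ x y z : G,
      (F'm x y ▷ F'.obj z) ≫ F'm (x ⊗ y) z ≫ F'.map (α_ x y z).hom =
        (α_ (F'.obj x) (F'.obj y) (F'.obj z)).hom ≫ (F'.obj x ◁ F'm y z) ≫ F'm x (y ⊗ z))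
    (hFSF2 : ∀ x y : G,
      Fm x y ≫ F.map (β_ x y).hom = (β_ (F.obj x) (F.obj y)).hom ≫ Fm y x)
    (hF'SF2 : ∀ x y : G,
      F'm x y ≫ F'.map (β_ x y).hom = (β_ (F'.obj x) (F'.obj y)).hom ≫ F'm y x)
    (hFSF3l : ∀ x : G,
      (F₀ ▷ F.obj x) ≫ Fm (𝟙_ G) x ≫ F.map (λ_ x).hom = (λ_ (F.obj x)).hom)
    (hF'SF3l : ∀ x : G,
      (F'₀ ▷ F'.obj x) ≫ F'm (𝟙_ G) x ≫ F'.map (λ_ x).hom = (λ_ (F'.obj x)).hom)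
    (hFSF3r : ∀ x : G,
      (F.obj x ◁ F₀) ≫ Fm x (𝟙_ G) ≫ F.map (ρ_ x).hom = (ρ_ (F.obj x)).hom)
    (hF'SF3r : ∀ x : G,
      (F'.obj x ◁ F'₀) ≫ F'm x (𝟙_ G) ≫ F'.map (ρ_ x).hom = (ρ_ (F'.obj x)).hom)
    -- data of `F ⊞ F'`:
    (Hobj : G → G') (hHobj : ∀ x, Hobj x = F.obj x ⊗ F'.obj x)
    (Hmap : ∀ {x y : G}, (x ⟶ y) → (F.obj x ⊗ F'.obj x ⟶ F.obj y ⊗ F'.obj y))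
    (hHmap : ∀ {x y : G} (f : x ⟶ y), Hmap f = (F.map f ⊗ₘ F'.map f))
    (Hm : ∀ x y : G,
      (F.obj x ⊗ F'.obj x) ⊗ (F.obj y ⊗ F'.obj y) ⟶ F.obj (x ⊗ y) ⊗ F'.obj (x ⊗ y))
    (hHm : ∀ x y : G,
      Hm x y = ac (F.obj x) (F'.obj x) (F.obj y) (F'.obj y) ≫ (Fm x y ⊗ₘ F'm x y))
    (H₀ : 𝟙_ G' ⟶ F.obj (𝟙_ G) ⊗ F'.obj (𝟙_ G))
    (hH₀ : H₀ = (λ_ (𝟙_ G')).inv ≫ (F₀ ⊗ₘ F'₀)) :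
    -- `F ⊞ F'` is a symmetric monoidal functor:
    (∀ x : G, Hmap (𝟙 x) = 𝟙 (F.obj x ⊗ F'.obj x)) ∧
    (∀ {x y z : G} (f : x ⟶ y) (g : y ⟶ z), Hmap (f ≫ g) = Hmap f ≫ Hmap g) ∧
    (∀ x y, IsIso (Hm x y)) ∧ IsIso H₀ ∧
    (∀ {x x' y y' : G} (f : x ⟶ x') (g : y ⟶ y'),
      (Hmap f ⊗ₘ Hmap g) ≫ Hm x' y' = Hm x y ≫ Hmap (f ⊗ₘ g)) ∧
    (∀ x y z : G,
      (Hm x y ▷ (F.obj z ⊗ F'.obj z)) ≫ Hm (x ⊗ y) z ≫ Hmap (α_ x y z).hom =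
        (α_ (F.obj x ⊗ F'.obj x) (F.obj y ⊗ F'.obj y) (F.obj z ⊗ F'.obj z)).hom ≫
          ((F.obj x ⊗ F'.obj x) ◁ Hm y z) ≫ Hm x (y ⊗ z)) ∧
    (∀ x y : G,
      Hm x y ≫ Hmap (β_ x y).hom =
        (β_ (F.obj x ⊗ F'.obj x) (F.obj y ⊗ F'.obj y)).hom ≫ Hm y x) ∧
    (∀ x : G,
      (H₀ ▷ (F.obj x ⊗ F'.obj x)) ≫ Hm (𝟙_ G) x ≫ Hmap (λ_ x).hom =
        (λ_ (F.obj x ⊗ F'.obj x)).hom) ∧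
    (∀ x : G,
      ((F.obj x ⊗ F'.obj x) ◁ H₀) ≫ Hm x (𝟙_ G) ≫ Hmap (ρ_ x).hom =
        (ρ_ (F.obj x ⊗ F'.obj x)).hom) := by
  have hμiso : ∀ (a b c d : G'), IsIso (tensorμ a b c d) := fun a b c d =>
    ⟨tensorδ a b c d, tensorμ_tensorδ a b c d, tensorδ_tensorμ a b c d⟩
  refine ⟨?_, ?_, ?_, ?_, ?_, ?_, ?_, ?_, ?_⟩
  · intro x; rw [hHmap]; simp
  · intro x y z f g; simp [hHmap, ← tensorHom_comp_tensorHom]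
  · intro x y
    rw [hHm, ac_eq_tensorμ]
    haveI := hFiso x y; haveI := hF'iso x y; haveI := hμiso
    infer_instance
  · rw [hH₀]; haveI := hF₀iso; haveI := hF'₀iso; infer_instance
  · intro x x' y y' f g
    rw [hHmap f, hHmap g, hHmap (f ⊗ₘ g), hHm, hHm, ac_eq_tensorμ, ac_eq_tensorμ]
    rw [tensorμ_natural_assoc (F.map f) (F'.map f) (F.map g) (F'.map g)]
    rw [Category.assoc, tensorHom_comp_tensorHom, tensorHom_comp_tensorHom, hFnat, hF'nat, ← tensorHom_comp_tensorHom]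
  · intro x y z
    rw [hHm, hHm, hHm, hHm, hHmap, ac_eq_tensorμ, ac_eq_tensorμ, ac_eq_tensorμ, ac_eq_tensorμ]
    calc (tensorμ (F.obj x) (F'.obj x) (F.obj y) (F'.obj y) ≫ (Fm x y ⊗ₘ F'm x y)) ▷ (F.obj z ⊗ F'.obj z) ≫
          (tensorμ (F.obj (x ⊗ y)) (F'.obj (x ⊗ y)) (F.obj z) (F'.obj z) ≫ (Fm (x ⊗ y) z ⊗ₘ F'm (x ⊗ y) z)) ≫
          (F.map (α_ x y z).hom ⊗ₘ F'.map (α_ x y z).hom)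
        = tensorμ (F.obj x) (F'.obj x) (F.obj y) (F'.obj y) ▷ (F.obj z ⊗ F'.obj z) ≫ tensorμ (F.obj x ⊗ F.obj y) (F'.obj x ⊗ F'.obj y) (F.obj z) (F'.obj z) ≫
            ((Fm x y ▷ F.obj z ≫ Fm (x ⊗ y) z ≫ F.map (α_ x y z).hom) ⊗ₘ
             (F'm x y ▷ F'.obj z ≫ F'm (x ⊗ y) z ≫ F'.map (α_ x y z).hom)) := by
          simp only [comp_whiskerRight, Category.assoc]
          rw [tensorμ_natural_left_assoc (Fm x y) (F'm x y)]
          rw [tensorHom_comp_tensorHom_assoc, tensorHom_comp_tensorHom]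
          simp only [Category.assoc]
      _ = tensorμ (F.obj x) (F'.obj x) (F.obj y) (F'.obj y) ▷ (F.obj z ⊗ F'.obj z) ≫ tensorμ (F.obj x ⊗ F.obj y) (F'.obj x ⊗ F'.obj y) (F.obj z) (F'.obj z) ≫
            ((α_ (F.obj x) (F.obj y) (F.obj z)).hom ⊗ₘ
              (α_ (F'.obj x) (F'.obj y) (F'.obj z)).hom) ≫
            ((F.obj x ◁ Fm y z) ⊗ₘ (F'.obj x ◁ F'm y z)) ≫ (Fm x (y ⊗ z) ⊗ₘ F'm x (y ⊗ z)) := by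
          rw [hFSF1, hF'SF1, ← tensorHom_comp_tensorHom, ← tensorHom_comp_tensorHom]
      _ = (α_ (F.obj x ⊗ F'.obj x) (F.obj y ⊗ F'.obj y) (F.obj z ⊗ F'.obj z)).hom ≫ ((F.obj x ⊗ F'.obj x) ◁ tensorμ (F.obj y) (F'.obj y) (F.obj z) (F'.obj z)) ≫ tensorμ (F.obj x) (F'.obj x) (F.obj y ⊗ F.obj z) (F'.obj y ⊗ F'.obj z) ≫
            ((F.obj x ◁ Fm y z) ⊗ₘ (F'.obj x ◁ F'm y z)) ≫ (Fm x (y ⊗ z) ⊗ₘ F'm x (y ⊗ z)) := by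
          rw [tensor_associativity_assoc]
      _ = _ := by
          rw [← tensorμ_natural_right_assoc (F.obj x) (F'.obj x) (Fm y z) (F'm y z)]
          simp only [Category.assoc, MonoidalCategory.whiskerLeft_comp]
  · intro x y
    rw [hHm, hHm, hHmap, ac_eq_tensorμ, ac_eq_tensorμ]
    rw [Category.assoc, tensorHom_comp_tensorHom, hFSF2, hF'SF2, ← tensorHom_comp_tensorHom, ← Category.assoc,
      tensorμ_braiding', Category.assoc]
  · intro x
    rw [hH₀, hHm, hHmap, ac_eq_tensorμ]
    simp only [comp_whiskerRight, Category.assoc]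
    rw [tensorμ_natural_left_assoc F₀ F'₀, tensorHom_comp_tensorHom_assoc, tensorHom_comp_tensorHom]
    simp only [Category.assoc]
    rw [hFSF3l, hF'SF3l, ← tensor_left_unitality]
  · intro x
    rw [hH₀, hHm, hHmap, ac_eq_tensorμ]
    simp only [MonoidalCategory.whiskerLeft_comp, Category.assoc]
    rw [tensorμ_natural_right_assoc (F.obj x) (F'.obj x) F₀ F'₀, tensorHom_comp_tensorHom_assoc,
      tensorHom_comp_tensorHom]
    simp only [Category.assoc]
    rw [hFSF3r, hF'SF3r, ← tensor_right_unitality]
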